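/- arXiv:1706.05441 — 2 statements merged into one kernel-verified Lean document; each statement's English description precedes it below -/
import Mathlib

section
/- Suppose an optimal triple (x*, q*, D*) exists. Then for any Mirror-P-EXTRA trajectory (x^k, q^k, D^k), the sequence {x^k} converges to a matrix x̂ ∈ ℝ^{n×p} that is an optimal solution of min_{x∈ℝ^{n×p}} Σ_{i=1}^n h_i(x_i) subject to Σ_{i=1}^n (x_i − r_i) = 0. -/
open Matrix Filter Topology

noncomputable section

/-- `d` is a subgradient of `h` at `x`. -/
def IsSubgradAt {p : ℕ} (h : (Fin p → ℝ) → ℝ) (d x : Fin p → ℝ) : Prop :=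
  ∀ y, h x + d ⬝ᵥ (y - x) ≤ h y

def ip {m p : Type*} [Fintype m] [Fintype p] (A B : Matrix m p ℝ) : ℝ :=
  ∑ i, ∑ j, A i j * B i j

variable {m p : Type*} [Fintype m] [Fintype p]

lemma ip_comm (A B : Matrix m p ℝ) : ip A B = ip B A := by
  simp only [ip, mul_comm]

lemma ip_zero_right (A : Matrix m p ℝ) : ip A 0 = 0 := by
  simp [ip]

lemma ip_add_right (A B C : Matrix m p ℝ) : ip A (B + C) = ip A B + ip A C := by
  simp [ip, Matrix.add_apply, mul_add, Finset.sum_add_distrib]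

lemma ip_sub_right (A B C : Matrix m p ℝ) : ip A (B - C) = ip A B - ip A C := by
  simp [ip, Matrix.sub_apply, mul_sub, Finset.sum_sub_distrib]

lemma ip_sub_left (A B C : Matrix m p ℝ) : ip (A - B) C = ip A C - ip B C := by
  simp [ip, Matrix.sub_apply, sub_mul, Finset.sum_sub_distrib]

lemma ip_smul_right (a : ℝ) (A B : Matrix m p ℝ) : ip A (a • B) = a * ip A B := by
  simp only [ip, Matrix.smul_apply, smul_eq_mul, Finset.mul_sum, mul_left_comm]

lemma ip_neg_neg (A B : Matrix m p ℝ) : ip (-A) (-B) = ip A B := by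
  simp [ip]

lemma ip_self_nonneg (A : Matrix m p ℝ) : 0 ≤ ip A A :=
  Finset.sum_nonneg fun i _ => Finset.sum_nonneg fun j _ => mul_self_nonneg _

lemma sq_le_ip_self (A : Matrix m p ℝ) (i : m) (j : p) : (A i j)^2 ≤ ip A A := by
  have h1 : A i j * A i j ≤ ∑ j', (A i j') * (A i j') :=
    Finset.single_le_sum (f := fun j' => A i j' * A i j')
      (fun j' _ => mul_self_nonneg _) (Finset.mem_univ j)
  rw [sq]
  refine h1.trans ?_
  exact Finset.single_le_sum (f := fun i' => ∑ j', A i' j' * A i' j')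
    (fun i' _ => Finset.sum_nonneg fun j' _ => mul_self_nonneg _) (Finset.mem_univ i)

lemma ip_rows (A B : Matrix m p ℝ) : ip A B = ∑ i, A i ⬝ᵥ B i := rfl

lemma ip_eq_trace (A B : Matrix m p ℝ) : ip A B = (Aᵀ * B).trace := by
  unfold ip Matrix.trace
  simp only [Matrix.diag, Matrix.mul_apply, Matrix.transpose_apply]
  exact Finset.sum_comm ..

lemma ip_mul {l : Type*} [Fintype l] (W : Matrix l m ℝ) (A : Matrix m p ℝ)
    (C : Matrix l p ℝ) : ip (W * A) C = ip A (Wᵀ * C) := by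
  rw [ip_eq_trace, ip_eq_trace, Matrix.transpose_mul, Matrix.mul_assoc]

lemma ipM_comm {M : Matrix m m ℝ} (hM : Mᵀ = M) (A B : Matrix m p ℝ) :
    ip A (M * B) = ip B (M * A) := by
  rw [ip_comm, ip_mul, hM]

lemma polar {M : Matrix m m ℝ} (hM : Mᵀ = M) (A B C : Matrix m p ℝ) :
    2 * ip (A - B) (M * (A - C)) =
      ip (A - B) (M * (A - B)) + ip (A - C) (M * (A - C)) - ip (B - C) (M * (B - C)) := by
  have expand : ∀ X Y : Matrix m p ℝ, ip (X - Y) (M * (X - Y)) =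
      ip X (M * X) - ip X (M * Y) - ip Y (M * X) + ip Y (M * Y) := by
    intro X Y
    rw [Matrix.mul_sub, ip_sub_right, ip_sub_left, ip_sub_left]
    ring
  have L : ip (A - B) (M * (A - C)) =
      ip A (M * A) - ip A (M * C) - ip B (M * A) + ip B (M * C) := by
    rw [Matrix.mul_sub, ip_sub_right, ip_sub_left, ip_sub_left]
    ring
  rw [L, expand A B, expand A C, expand B C,
    ipM_comm hM C A, ipM_comm hM C B, ipM_comm hM B A]
  ring

lemma polar1 (A B C : Matrix m p ℝ) :
    2 * ip (A - B) (A - C) = ip (A - B) (A - B) + ip (A - C) (A - C) - ip (B - C) (B - C) := by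
  have expand : ∀ X Y : Matrix m p ℝ, ip (X - Y) (X - Y) =
      ip X X - ip X Y - ip Y X + ip Y Y := by
    intro X Y
    rw [ip_sub_right, ip_sub_left, ip_sub_left]
    ring
  have L : ip (A - B) (A - C) = ip A A - ip A C - ip B A + ip B C := by
    rw [ip_sub_right, ip_sub_left, ip_sub_left]
    ring
  rw [L, expand A B, expand A C, expand B C, ip_comm C A, ip_comm C B, ip_comm B A]
  ring

lemma ip_psd {M : Matrix m m ℝ} [DecidableEq m] (hM : M.PosSemidef) (A : Matrix m p ℝ) :
    0 ≤ ip A (M * A) := by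
  have key : ip A (M * A) = ∑ j, (fun i => A i j) ⬝ᵥ (M *ᵥ (fun i => A i j)) := by
    unfold ip
    rw [Finset.sum_comm]
    refine Finset.sum_congr rfl fun j _ => Finset.sum_congr rfl fun i _ => ?_
    simp [Matrix.mul_apply, Matrix.mulVec, dotProduct]
  rw [key]
  refine Finset.sum_nonneg fun j _ => ?_
  have := hM.dotProduct_mulVec_nonneg (fun i => A i j)
  simpa using this

lemma ip_diagonal {d : m → ℝ} [DecidableEq m] (A : Matrix m p ℝ) :
    ip A (Matrix.diagonal d * A) = ∑ i, ∑ j, d i * (A i j)^2 := by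
  unfold ip
  refine Finset.sum_congr rfl fun i _ => Finset.sum_congr rfl fun j _ => ?_
  rw [Matrix.diagonal_mul]
  ring

lemma entry_le_ip_diagonal {d : m → ℝ} [DecidableEq m] (hd : ∀ i, 0 ≤ d i)
    (A : Matrix m p ℝ) (i : m) (j : p) :
    d i * (A i j)^2 ≤ ip A (Matrix.diagonal d * A) := by
  rw [ip_diagonal]
  have h1 : d i * (A i j)^2 ≤ ∑ j', d i * (A i j')^2 :=
    Finset.single_le_sum (f := fun j' => d i * (A i j')^2)
      (fun j' _ => mul_nonneg (hd i) (sq_nonneg _)) (Finset.mem_univ j)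
  refine h1.trans ?_
  exact Finset.single_le_sum (f := fun i' => ∑ j', d i' * (A i' j')^2)
    (fun i' _ => Finset.sum_nonneg fun j' _ => mul_nonneg (hd i') (sq_nonneg _))
    (Finset.mem_univ i)

lemma ip_sub_self_le (A B : Matrix m p ℝ) :
    ip (A - B) (A - B) ≤ 2 * ip A A + 2 * ip B B := by
  unfold ip
  rw [Finset.mul_sum, Finset.mul_sum, ← Finset.sum_add_distrib]
  refine Finset.sum_le_sum fun i _ => ?_
  rw [Finset.mul_sum, Finset.mul_sum, ← Finset.sum_add_distrib]
  refine Finset.sum_le_sum fun j _ => ?_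
  simp only [Matrix.sub_apply]
  nlinarith [sq_nonneg (A i j + B i j)]

lemma tendsto_zero_of_sq (f : ℕ → ℝ) (hf : Tendsto (fun k => (f k)^2) atTop (𝓝 0)) :
    Tendsto f atTop (𝓝 0) := by
  have h1 : Tendsto (fun k => |f k|) atTop (𝓝 0) := by
    have h2 : Tendsto (fun k => Real.sqrt ((f k)^2)) atTop (𝓝 (Real.sqrt 0)) :=
      (Real.continuous_sqrt.tendsto 0).comp hf
    simpa [Real.sqrt_sq_eq_abs] using h2
  have h3 : Tendsto (fun k => -|f k|) atTop (𝓝 0) := by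
    simpa using h1.neg
  exact tendsto_of_tendsto_of_tendsto_of_le_of_le h3
    h1 (fun k => neg_abs_le _) (fun k => le_abs_self _)

lemma tendsto_zero_of_antitone_subseq (V : ℕ → ℝ) (hpos : ∀ k, 0 ≤ V k)
    (hdec : ∀ k, V (k + 1) ≤ V k) (φ : ℕ → ℕ)
    (hs : Tendsto (fun k => V (φ k)) atTop (𝓝 0)) : Tendsto V atTop (𝓝 0) := by
  have hanti : Antitone V := antitone_nat_of_succ_le hdec
  rw [Metric.tendsto_atTop]
  intro ε hε
  rw [Metric.tendsto_atTop] at hs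
  obtain ⟨K, hK⟩ := hs ε hε
  refine ⟨φ K, fun k hk => ?_⟩
  have h1 := hK K le_rfl
  rw [Real.dist_eq, sub_zero] at h1 ⊢
  have h2 : V k ≤ V (φ K) := hanti hk
  rw [abs_of_nonneg (hpos _)] at h1 ⊢
  linarith

lemma exists_subseq_tendsto_mat {a b : ℕ} (f : ℕ → Matrix (Fin a) (Fin b) ℝ) (R : ℝ)
    (hf : ∀ k i j, |f k i j| ≤ R) :
    ∃ (L : Matrix (Fin a) (Fin b) ℝ) (φ : ℕ → ℕ), StrictMono φ ∧
      ∀ i j, Tendsto (fun k => f (φ k) i j) atTop (𝓝 (L i j)) := by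
  set g : ℕ → (Fin a → Fin b → ℝ) := fun k i j => f k i j with hg
  have hR0 : (0:ℝ) ≤ max R 0 := le_max_right _ _
  have hmem : ∀ k, g k ∈ Metric.closedBall (0 : Fin a → Fin b → ℝ) (max R 0) := by
    intro k
    rw [mem_closedBall_zero_iff]
    rw [pi_norm_le_iff_of_nonneg hR0]
    intro i
    rw [pi_norm_le_iff_of_nonneg hR0]
    intro j
    rw [Real.norm_eq_abs]
    exact (hf k i j).trans (le_max_left _ _)
  obtain ⟨L, _, φ, hφ, hconv⟩ :=
    (isCompact_closedBall (0 : Fin a → Fin b → ℝ) (max R 0)).tendsto_subseq hmem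
  refine ⟨Matrix.of L, φ, hφ, fun i j => ?_⟩
  have h1 := tendsto_pi_nhds.mp hconv i
  exact tendsto_pi_nhds.mp h1 j

lemma tendsto_matrix_of_entries {a b : ℕ} (f : ℕ → Matrix (Fin a) (Fin b) ℝ)
    (L : Matrix (Fin a) (Fin b) ℝ)
    (hf : ∀ i j, Tendsto (fun k => f k i j) atTop (𝓝 (L i j))) :
    Tendsto f atTop (𝓝 L) := by
  exact tendsto_pi_nhds.mpr fun i => tendsto_pi_nhds.mpr fun j => hf i j

lemma tendsto_ip_zero {a b : Type*} [Fintype a] [Fintype b]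
    (f g : ℕ → Matrix a b ℝ) (Lg : Matrix a b ℝ)
    (hf : ∀ i j, Tendsto (fun k => f k i j) atTop (𝓝 0))
    (hg : ∀ i j, Tendsto (fun k => g k i j) atTop (𝓝 (Lg i j))) :
    Tendsto (fun k => ip (f k) (g k)) atTop (𝓝 0) := by
  have key : Tendsto (fun k => ∑ i, ∑ j, f k i j * g k i j) atTop
      (𝓝 (∑ i : a, ∑ j : b, (0 : ℝ))) := by
    refine tendsto_finset_sum _ fun i _ => ?_
    refine tendsto_finset_sum _ fun j _ => ?_
    simpa using (hf i j).mul (hg i j)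
  simpa [ip] using key
set_option maxHeartbeats 2000000 in
/-- Convergence of Mirror-P-EXTRA to an optimal solution of the resource
allocation problem (part of Theorem 1). -/
theorem stmt_4 (n p : ℕ) (hn : 2 ≤ n) (hp : 1 ≤ p)
    (U : Matrix (Fin (n - 1)) (Fin n) ℝ)
    (hU : ∀ v : Fin n → ℝ, U.mulVec v = 0 ↔ ∃ a : ℝ, v = fun _ => a)
    (r : Matrix (Fin n) (Fin p) ℝ)
    (h : Fin n → (Fin p → ℝ) → ℝ)
    (hconv : ∀ i, ConvexOn ℝ Set.univ (h i))
    (c : ℝ) (hc : 0 < c)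
    (β : Fin n → ℝ) (hβ : ∀ i, 0 < β i)
    (hPSD : (Matrix.diagonal β - c • (Uᵀ * U)).PosSemidef)
    -- Mirror-P-EXTRA trajectory
    (x D : ℕ → Matrix (Fin n) (Fin p) ℝ)
    (q : ℕ → Matrix (Fin (n - 1)) (Fin p) ℝ)
    (hsub : ∀ k i, IsSubgradAt (h i) (D k i) (x k i))
    (hrec1 : ∀ k : ℕ,
      x (k + 1) - r + c • (Uᵀ * q (k + 1))
        + (Matrix.diagonal β - c • (Uᵀ * U)) * (D (k + 1) - D k) = 0)
    (hrec2 : ∀ k : ℕ, q (k + 1) = q k + U * D (k + 1))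
    -- an optimal triple exists
    (hopt : ∃ (xs Ds : Matrix (Fin n) (Fin p) ℝ) (qs : Matrix (Fin (n - 1)) (Fin p) ℝ),
      (∀ i, IsSubgradAt (h i) (Ds i) (xs i)) ∧
      xs - r + c • (Uᵀ * qs) = 0 ∧
      U * Ds = 0) :
    ∃ xhat : Matrix (Fin n) (Fin p) ℝ,
      Tendsto x atTop (𝓝 xhat) ∧
      (∑ i, (xhat i - r i)) = 0 ∧
      ∀ x' : Matrix (Fin n) (Fin p) ℝ,
        (∑ i, (x' i - r i)) = 0 →
          ∑ i, h i (xhat i) ≤ ∑ i, h i (x' i) := by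
  obtain ⟨xs, Ds, qs, hsubs, hxs, hUDs⟩ := hopt
  set M : Matrix (Fin n) (Fin n) ℝ := Matrix.diagonal β - c • (Uᵀ * U) with hMdef
  have hMsym : Mᵀ = M := by
    have h1 := hPSD.1
    ext i j
    have h2 := congrFun (congrFun h1 i) j
    simpa [Matrix.conjTranspose_apply, Matrix.transpose_apply] using h2
  have hBdecomp : Matrix.diagonal β = M + c • (Uᵀ * U) := by
    rw [hMdef]; abel
  have hQB : ∀ X : Matrix (Fin n) (Fin p) ℝ,
      ip X (Matrix.diagonal β * X) = ip X (M * X) + c * ip (U * X) (U * X) := by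
    intro X
    rw [hBdecomp, Matrix.add_mul, ip_add_right, Matrix.smul_mul, ip_smul_right,
      Matrix.mul_assoc, ← ip_mul]
  have hSnn : ∀ (xs' Ds' : Matrix (Fin n) (Fin p) ℝ),
      (∀ i, IsSubgradAt (h i) (Ds' i) (xs' i)) → ∀ k,
      0 ≤ ip (D k - Ds') (x k - xs') := by
    intro xs' Ds' hDs' k
    rw [ip_rows]
    refine Finset.sum_nonneg fun i _ => ?_
    have h1 := hsub k i (xs' i)
    have h2 := hDs' i (x k i)
    have e : (D k - Ds') i ⬝ᵥ (x k - xs') i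
        = (h i (xs' i) - (h i (x k i) + D k i ⬝ᵥ (xs' i - x k i)))
          + (h i (x k i) - (h i (xs' i) + Ds' i ⬝ᵥ (x k i - xs' i))) := by
      show (D k i - Ds' i) ⬝ᵥ (x k i - xs' i) = _
      simp only [sub_dotProduct, dotProduct_sub]
      ring
    rw [e]
    have h3 : h i (x k i) + D k i ⬝ᵥ (xs' i - x k i) ≤ h i (xs' i) := h1
    have h4 : h i (xs' i) + Ds' i ⬝ᵥ (x k i - xs' i) ≤ h i (x k i) := h2
    linarith
  have hUD : ∀ k, U * D (k + 1) = q (k + 1) - q k := by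
    intro k
    rw [hrec2 k]
    abel
  have hE1 : ∀ (xs' : Matrix (Fin n) (Fin p) ℝ) (qs' : Matrix (Fin (n-1)) (Fin p) ℝ),
      xs' - r + c • (Uᵀ * qs') = 0 → ∀ k,
      x (k+1) - xs' + c • (Uᵀ * (q (k+1) - qs')) + M * (D (k+1) - D k) = 0 := by
    intro xs' qs' hx' k
    calc x (k+1) - xs' + c • (Uᵀ * (q (k+1) - qs')) + M * (D (k+1) - D k)
        = (x (k+1) - r + c • (Uᵀ * q (k+1)) + M * (D (k+1) - D k))
          - (xs' - r + c • (Uᵀ * qs')) := by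
          rw [Matrix.mul_sub, smul_sub]; abel
      _ = 0 := by rw [hrec1 k, hx', sub_zero]
  have hstep : ∀ (xs' Ds' : Matrix (Fin n) (Fin p) ℝ)
      (qs' : Matrix (Fin (n-1)) (Fin p) ℝ),
      (xs' - r + c • (Uᵀ * qs') = 0) → U * Ds' = 0 → ∀ k,
      c * ip (q k - qs') (q k - qs') + ip (D k - Ds') (M * (D k - Ds'))
        = c * ip (q (k+1) - qs') (q (k+1) - qs')
          + ip (D (k+1) - Ds') (M * (D (k+1) - Ds'))
          + c * ip (q (k+1) - q k) (q (k+1) - q k)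
          + ip (D (k+1) - D k) (M * (D (k+1) - D k))
          + 2 * ip (D (k+1) - Ds') (x (k+1) - xs') := by
    intro xs' Ds' qs' hx' hD' k
    have e1 := hE1 xs' qs' hx' k
    have e2 := congrArg (fun Z => ip (D (k+1) - Ds') Z) e1
    simp only [ip_add_right, ip_smul_right, ip_zero_right] at e2
    have e3 : ip (D (k+1) - Ds') (Uᵀ * (q (k+1) - qs'))
        = ip (q (k+1) - q k) (q (k+1) - qs') := by
      rw [← ip_mul U]
      congr 1
      rw [Matrix.mul_sub, hD', hUD k, sub_zero]
    rw [e3] at e2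
    have p1 := polar1 (q (k+1)) (q k) qs'
    have p2 := polar hMsym (D (k+1)) Ds' (D k)
    have p3 : ip (Ds' - D k) (M * (Ds' - D k))
        = ip (D k - Ds') (M * (D k - Ds')) := by
      rw [← neg_sub (D k) Ds', Matrix.mul_neg, ip_neg_neg]
    rw [p3] at p2
    linear_combination (-2 : ℝ) * e2 + c * p1 + p2
  -- Lyapunov function for the given optimal triple
  set V : ℕ → ℝ := fun k =>
    c * ip (q k - qs) (q k - qs) + ip (D k - Ds) (M * (D k - Ds)) with hVdef
  have hVk : ∀ k, V k = c * ip (q k - qs) (q k - qs) + ip (D k - Ds) (M * (D k - Ds)) :=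
    fun k => rfl
  have hVnn : ∀ k, 0 ≤ V k := fun k =>
    add_nonneg (mul_nonneg hc.le (ip_self_nonneg _)) (ip_psd hPSD _)
  have hstep1 := hstep xs Ds qs hxs hUDs
  have hVdec : ∀ k, V (k+1) ≤ V k := by
    intro k
    have e := hstep1 k
    have s1 := hSnn xs Ds hsubs (k+1)
    have n1 : 0 ≤ c * ip (q (k+1) - q k) (q (k+1) - q k) :=
      mul_nonneg hc.le (ip_self_nonneg _)
    have n2 : 0 ≤ ip (D (k+1) - D k) (M * (D (k+1) - D k)) := ip_psd hPSD _
    rw [hVk, hVk]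
    linarith
  have hVanti : Antitone V := antitone_nat_of_succ_le hVdec
  have hVlim : Tendsto V atTop (𝓝 (⨅ k, V k)) :=
    tendsto_atTop_ciInf hVanti ⟨0, by rintro y ⟨k, rfl⟩; exact hVnn k⟩
  have hVshift : Tendsto (fun k => V (k+1)) atTop (𝓝 (⨅ k, V k)) :=
    (tendsto_add_atTop_iff_nat 1).mpr hVlim
  have hdiff : Tendsto (fun k => V k - V (k+1)) atTop (𝓝 0) := by
    simpa using hVlim.sub hVshift
  -- the one-step bound
  have hkey : ∀ k, c * ip (q (k+1) - q k) (q (k+1) - q k) ≤ V k - V (k+1) ∧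
      ip (D (k+1) - D k) (M * (D (k+1) - D k)) ≤ V k - V (k+1) := by
    intro k
    have e := hstep1 k
    have s1 := hSnn xs Ds hsubs (k+1)
    have n1 : 0 ≤ c * ip (q (k+1) - q k) (q (k+1) - q k) :=
      mul_nonneg hc.le (ip_self_nonneg _)
    have n2 : 0 ≤ ip (D (k+1) - D k) (M * (D (k+1) - D k)) := ip_psd hPSD _
    rw [hVk k, hVk (k+1)]
    constructor <;> linarith
  have hNq : Tendsto (fun k => ip (q (k+1) - q k) (q (k+1) - q k)) atTop (𝓝 0) := by
    refine squeeze_zero (fun k => ip_self_nonneg _)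
      (g := fun k => (V k - V (k+1)) / c) (fun k => ?_) ?_
    · rw [le_div_iff₀ hc, mul_comm]
      exact (hkey k).1
    · simpa using hdiff.div_const c
  have hQD : Tendsto (fun k => ip (D (k+1) - D k) (M * (D (k+1) - D k)))
      atTop (𝓝 0) :=
    squeeze_zero (fun k => ip_psd hPSD _) (fun k => (hkey k).2) hdiff
  -- entrywise convergence of q-differences
  have hdq : ∀ i j, Tendsto (fun k => q (k+1) i j - q k i j) atTop (𝓝 0) := by
    intro i j
    refine tendsto_zero_of_sq _ (squeeze_zero (fun k => sq_nonneg _) (fun k => ?_) hNq)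
    simpa [Matrix.sub_apply] using sq_le_ip_self (q (k+1) - q k) i j
  -- the B-norm of D-differences tends to zero
  have hUdd : ∀ k, U * (D (k+2) - D (k+1)) = (q (k+2) - q (k+1)) - (q (k+1) - q k) := by
    intro k
    rw [Matrix.mul_sub, hUD (k+1), hUD k]
  have hWB : Tendsto (fun k => ip (D (k+2) - D (k+1))
      (Matrix.diagonal β * (D (k+2) - D (k+1)))) atTop (𝓝 0) := by
    have hbd : ∀ k, ip (D (k+2) - D (k+1)) (Matrix.diagonal β * (D (k+2) - D (k+1)))
        ≤ ip (D (k+2) - D (k+1)) (M * (D (k+2) - D (k+1)))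
          + c * (2 * ip (q (k+2) - q (k+1)) (q (k+2) - q (k+1))
            + 2 * ip (q (k+1) - q k) (q (k+1) - q k)) := by
      intro k
      rw [hQB]
      have h1 : ip (U * (D (k+2) - D (k+1))) (U * (D (k+2) - D (k+1)))
          ≤ 2 * ip (q (k+2) - q (k+1)) (q (k+2) - q (k+1))
            + 2 * ip (q (k+1) - q k) (q (k+1) - q k) := by
        rw [hUdd k]
        exact ip_sub_self_le _ _
      have h2 := mul_le_mul_of_nonneg_left h1 hc.le
      linarith
    have hzero : Tendsto (fun k => ip (D (k+2) - D (k+1)) (M * (D (k+2) - D (k+1)))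
        + c * (2 * ip (q (k+2) - q (k+1)) (q (k+2) - q (k+1))
          + 2 * ip (q (k+1) - q k) (q (k+1) - q k))) atTop (𝓝 0) := by
      have t1 : Tendsto (fun k => ip (D (k+1+1) - D (k+1)) (M * (D (k+1+1) - D (k+1))))
          atTop (𝓝 0) := (tendsto_add_atTop_iff_nat 1).mpr hQD
      have t2 : Tendsto (fun k => ip (q (k+1+1) - q (k+1)) (q (k+1+1) - q (k+1)))
          atTop (𝓝 0) := (tendsto_add_atTop_iff_nat 1).mpr hNq
      have := t1.add (((t2.const_mul 2).add (hNq.const_mul 2)).const_mul c)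
      simpa using this
    refine squeeze_zero (fun k => ?_) hbd hzero
    rw [hQB]
    exact add_nonneg (ip_psd hPSD _) (mul_nonneg hc.le (ip_self_nonneg _))
  -- entrywise convergence of D-differences
  have hdD : ∀ i j, Tendsto (fun k => D (k+1) i j - D k i j) atTop (𝓝 0) := by
    intro i j
    refine (tendsto_add_atTop_iff_nat 1).mp ?_
    refine tendsto_zero_of_sq _ ?_
    refine squeeze_zero (fun k => sq_nonneg _)
      (g := fun k => ip (D (k+2) - D (k+1)) (Matrix.diagonal β * (D (k+2) - D (k+1))) / β i)
      (fun k => ?_) ?_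
    · rw [le_div_iff₀ (hβ i), mul_comm]
      simpa [Matrix.sub_apply] using
        entry_le_ip_diagonal (fun i' => (hβ i').le) (D (k+2) - D (k+1)) i j
    · simpa using hWB.div_const (β i)
  -- uniform bounds on the entries of q and D
  have hVle0 : ∀ k, V k ≤ V 0 := fun k => hVanti (Nat.zero_le k)
  have habs_of_sq : ∀ (e t : ℝ), e^2 ≤ t → |e| ≤ Real.sqrt t := by
    intro e t het
    rw [← Real.sqrt_sq_eq_abs]
    exact Real.sqrt_le_sqrt het
  have hqbdd : ∀ k i j, |q k i j| ≤ ∑ i', ∑ j', (|qs i' j'| + Real.sqrt (V 0 / c)) := by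
    intro k i j
    have h1 : (q k i j - qs i j)^2 ≤ V 0 / c := by
      have h2 : (q k i j - qs i j)^2 ≤ ip (q k - qs) (q k - qs) := by
        simpa [Matrix.sub_apply] using sq_le_ip_self (q k - qs) i j
      have h3 : c * ip (q k - qs) (q k - qs) ≤ V 0 := by
        have := ip_psd hPSD (D k - Ds)
        have := hVle0 k
        rw [hVk k] at this
        linarith [ip_psd hPSD (D k - Ds)]
      rw [le_div_iff₀ hc]
      calc (q k i j - qs i j)^2 * c ≤ ip (q k - qs) (q k - qs) * c := by
            exact mul_le_mul_of_nonneg_right h2 hc.le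
        _ = c * ip (q k - qs) (q k - qs) := mul_comm _ _
        _ ≤ V 0 := h3
    have h4 : |q k i j| ≤ |qs i j| + Real.sqrt (V 0 / c) := by
      have h5 := habs_of_sq _ _ h1
      calc |q k i j| = |qs i j + (q k i j - qs i j)| := by congr 1; ring
        _ ≤ |qs i j| + |q k i j - qs i j| := abs_add_le _ _
        _ ≤ |qs i j| + Real.sqrt (V 0 / c) := by linarith
    refine h4.trans ?_
    have hnn : ∀ i' j', (0:ℝ) ≤ |qs i' j'| + Real.sqrt (V 0 / c) := fun i' j' =>
      add_nonneg (abs_nonneg _) (Real.sqrt_nonneg _)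
    calc |qs i j| + Real.sqrt (V 0 / c)
        ≤ ∑ j', (|qs i j'| + Real.sqrt (V 0 / c)) :=
          Finset.single_le_sum (f := fun j' => |qs i j'| + Real.sqrt (V 0 / c))
            (fun j' _ => hnn i j') (Finset.mem_univ j)
      _ ≤ ∑ i', ∑ j', (|qs i' j'| + Real.sqrt (V 0 / c)) :=
          Finset.single_le_sum (f := fun i' => ∑ j', (|qs i' j'| + Real.sqrt (V 0 / c)))
            (fun i' _ => Finset.sum_nonneg fun j' _ => hnn i' j') (Finset.mem_univ i)
  have hDbdd : ∀ k i j, |D (k+2) i j|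
      ≤ ∑ i', ∑ j', (|Ds i' j'| + Real.sqrt ((V 0 + V 0) / β i')) := by
    intro k i j
    have hQBle : ip (D (k+2) - Ds) (Matrix.diagonal β * (D (k+2) - Ds)) ≤ V 0 + V 0 := by
      rw [hQB]
      have h1 : ip (D (k+2) - Ds) (M * (D (k+2) - Ds)) ≤ V 0 := by
        have h2 := hVle0 (k+2)
        rw [hVk] at h2
        have := mul_nonneg hc.le (ip_self_nonneg (q (k+2) - qs))
        linarith
      have h3 : U * (D (k+2) - Ds) = q (k+2) - q (k+1) := by
        rw [Matrix.mul_sub, hUDs, hUD (k+1), sub_zero]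
      have h4 : c * ip (U * (D (k+2) - Ds)) (U * (D (k+2) - Ds)) ≤ V 0 := by
        rw [h3]
        have h5 := (hkey (k+1)).1
        have h6 := hVle0 (k+1)
        have h7 := hVnn (k+2)
        linarith
      linarith
    have h1 : β i * (D (k+2) i j - Ds i j)^2 ≤ V 0 + V 0 := by
      have := entry_le_ip_diagonal (fun i' => (hβ i').le) (D (k+2) - Ds) i j
      simp only [Matrix.sub_apply] at this
      linarith
    have h2 : (D (k+2) i j - Ds i j)^2 ≤ (V 0 + V 0) / β i := by
      rw [le_div_iff₀ (hβ i), mul_comm]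
      exact h1
    have h4 : |D (k+2) i j| ≤ |Ds i j| + Real.sqrt ((V 0 + V 0) / β i) := by
      have h5 := habs_of_sq _ _ h2
      calc |D (k+2) i j| = |Ds i j + (D (k+2) i j - Ds i j)| := by congr 1; ring
        _ ≤ |Ds i j| + |D (k+2) i j - Ds i j| := abs_add_le _ _
        _ ≤ |Ds i j| + Real.sqrt ((V 0 + V 0) / β i) := by linarith
    refine h4.trans ?_
    have hnn : ∀ i' j', (0:ℝ) ≤ |Ds i' j'| + Real.sqrt ((V 0 + V 0) / β i') := fun i' j' =>
      add_nonneg (abs_nonneg _) (Real.sqrt_nonneg _)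
    calc |Ds i j| + Real.sqrt ((V 0 + V 0) / β i)
        ≤ ∑ j', (|Ds i j'| + Real.sqrt ((V 0 + V 0) / β i)) :=
          Finset.single_le_sum (f := fun j' => |Ds i j'| + Real.sqrt ((V 0 + V 0) / β i))
            (fun j' _ => hnn i j') (Finset.mem_univ j)
      _ ≤ ∑ i', ∑ j', (|Ds i' j'| + Real.sqrt ((V 0 + V 0) / β i')) :=
          Finset.single_le_sum
            (f := fun i' => ∑ j', (|Ds i' j'| + Real.sqrt ((V 0 + V 0) / β i')))
            (fun i' _ => Finset.sum_nonneg fun j' _ => hnn i' j') (Finset.mem_univ i)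
  -- Bolzano–Weierstrass: extract a convergent subsequence of (q, D)
  obtain ⟨qb, φ₁, hφ₁, hqb⟩ := exists_subseq_tendsto_mat (fun k => q (k+2)) _
    (fun k i j => hqbdd (k+2) i j)
  obtain ⟨Db, φ₂, hφ₂, hDb⟩ := exists_subseq_tendsto_mat (fun k => D (φ₁ k + 2)) _
    (fun k i j => hDbdd (φ₁ k) i j)
  set m : ℕ → ℕ := fun k => φ₁ (φ₂ k) with hmdef
  have hmTop : Tendsto m atTop atTop := (hφ₁.comp hφ₂).tendsto_atTop
  have hm1 : Tendsto (fun k => m k + 1) atTop atTop :=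
    tendsto_atTop_mono (fun k => Nat.le_add_right (m k) 1) hmTop
  have hm2 : Tendsto (fun k => m k + 2) atTop atTop :=
    tendsto_atTop_mono (fun k => Nat.le_add_right (m k) 2) hmTop
  have hqbm : ∀ i j, Tendsto (fun k => q (m k + 2) i j) atTop (𝓝 (qb i j)) :=
    fun i j => (hqb i j).comp hφ₂.tendsto_atTop
  have hDbm : ∀ i j, Tendsto (fun k => D (m k + 2) i j) atTop (𝓝 (Db i j)) :=
    fun i j => hDb i j
  have hqbm1 : ∀ i j, Tendsto (fun k => q (m k + 1) i j) atTop (𝓝 (qb i j)) := by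
    intro i j
    have t1 : Tendsto (fun k => q (m k + 1 + 1) i j - q (m k + 1) i j) atTop (𝓝 0) :=
      (hdq i j).comp hm1
    have t2 := (hqbm i j).sub t1
    simpa using t2
  -- generic limit of x along a subsequence
  have hxgen : ∀ (xs' : Matrix (Fin n) (Fin p) ℝ) (qs' : Matrix (Fin (n-1)) (Fin p) ℝ),
      xs' - r + c • (Uᵀ * qs') = 0 → ∀ (ψ : ℕ → ℕ) (qL : Matrix (Fin (n-1)) (Fin p) ℝ),
      (∀ l j, Tendsto (fun k => q (ψ k + 2) l j) atTop (𝓝 (qL l j))) →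
      (∀ l j, Tendsto (fun k => D (ψ k + 2) l j - D (ψ k + 1) l j) atTop (𝓝 0)) →
      ∀ i j, Tendsto (fun k => x (ψ k + 2) i j) atTop
        (𝓝 ((xs' - c • (Uᵀ * (qL - qs'))) i j)) := by
    intro xs' qs' hx' ψ qL hqL hdL i j
    have e1 : ∀ k, x (k+2) i j = xs' i j - c * ((Uᵀ * (q (k+2) - qs')) i j)
        - (M * (D (k+2) - D (k+1))) i j := by
      intro k
      have e := congrFun (congrFun (hE1 xs' qs' hx' (k+1)) i) j
      simp only [Matrix.add_apply, Matrix.sub_apply, Matrix.smul_apply,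
        Matrix.zero_apply, smul_eq_mul] at e
      linarith
    have t1 : Tendsto (fun k => (Uᵀ * (q (ψ k + 2) - qs')) i j) atTop
        (𝓝 ((Uᵀ * (qL - qs')) i j)) := by
      simp only [Matrix.mul_apply, Matrix.sub_apply]
      refine tendsto_finset_sum _ fun l _ => ?_
      exact tendsto_const_nhds.mul ((hqL l j).sub tendsto_const_nhds)
    have t2 : Tendsto (fun k => (M * (D (ψ k + 2) - D (ψ k + 1))) i j) atTop (𝓝 0) := by
      have t2' : Tendsto (fun k => ∑ l, M i l * (D (ψ k + 2) l j - D (ψ k + 1) l j)) atTop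
          (𝓝 (∑ _l : Fin n, (0:ℝ))) := tendsto_finset_sum _ fun l _ => by
            simpa using tendsto_const_nhds.mul (hdL l j)
      simpa [Matrix.mul_apply, Matrix.sub_apply] using t2'
    have t3 : Tendsto (fun k => xs' i j - c * ((Uᵀ * (q (ψ k + 2) - qs')) i j)
        - (M * (D (ψ k + 2) - D (ψ k + 1))) i j) atTop
        (𝓝 (xs' i j - c * ((Uᵀ * (qL - qs')) i j) - 0)) :=
      (tendsto_const_nhds.sub (t1.const_mul c)).sub t2
    have t4 : (xs' - c • (Uᵀ * (qL - qs'))) i j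
        = xs' i j - c * ((Uᵀ * (qL - qs')) i j) - 0 := by
      simp [Matrix.sub_apply, Matrix.smul_apply]
    rw [t4]
    exact t3.congr fun k => (e1 (ψ k)).symm
  set xb : Matrix (Fin n) (Fin p) ℝ := xs - c • (Uᵀ * (qb - qs)) with hxbdef
  have hxrel : xb - r + c • (Uᵀ * qb) = 0 := by
    rw [hxbdef, Matrix.mul_sub, smul_sub, ← hxs]
    abel
  have hdDm : ∀ l j, Tendsto (fun k => D (m k + 2) l j - D (m k + 1) l j) atTop (𝓝 0) :=
    fun l j => (hdD l j).comp hm1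
  have hxent : ∀ i j, Tendsto (fun k => x (m k + 2) i j) atTop (𝓝 (xb i j)) :=
    hxgen xs qs hxs m qb hqbm hdDm
  have hUDb : U * Db = 0 := by
    ext l j
    have t1 : Tendsto (fun k => ∑ s, U l s * D (m k + 2) s j) atTop
        (𝓝 (∑ s, U l s * Db s j)) :=
      tendsto_finset_sum _ fun s _ => tendsto_const_nhds.mul (hDbm s j)
    have t2 : Tendsto (fun k => ∑ s, U l s * D (m k + 2) s j) atTop (𝓝 0) := by
      have e : ∀ k, ∑ s, U l s * D (m k + 2) s j = q (m k + 2) l j - q (m k + 1) l j := by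
        intro k
        have e' := congrFun (congrFun (hUD (m k + 1)) l) j
        simpa [Matrix.mul_apply, Matrix.sub_apply] using e'
      have t3 := (hqbm l j).sub (hqbm1 l j)
      rw [sub_self] at t3
      exact t3.congr fun k => (e k).symm
    have := tendsto_nhds_unique t1 t2
    simpa [Matrix.mul_apply, Matrix.zero_apply] using this
  have hsubb : ∀ i, IsSubgradAt (h i) (Db i) (xb i) := by
    intro i y
    have hcont : Continuous (h i) :=
      continuousOn_univ.mp ((hconv i).continuousOn isOpen_univ)
    have hxrow : Tendsto (fun k => x (m k + 2) i) atTop (𝓝 (xb i)) :=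
      tendsto_pi_nhds.mpr fun j => hxent i j
    have hdot : Tendsto (fun k => D (m k + 2) i ⬝ᵥ (y - x (m k + 2) i)) atTop
        (𝓝 (Db i ⬝ᵥ (y - xb i))) := by
      simp only [dotProduct, Pi.sub_apply]
      exact tendsto_finset_sum _ fun j _ =>
        (hDbm i j).mul (tendsto_const_nhds.sub (hxent i j))
    have hh : Tendsto (fun k => h i (x (m k + 2) i)) atTop (𝓝 (h i (xb i))) :=
      (hcont.tendsto _).comp hxrow
    exact le_of_tendsto (hh.add hdot) (Filter.Eventually.of_forall fun k => hsub (m k + 2) i y)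
  -- second Lyapunov function, for the limit triple
  set Vb : ℕ → ℝ := fun k =>
    c * ip (q k - qb) (q k - qb) + ip (D k - Db) (M * (D k - Db)) with hVbdef
  have hVbk : ∀ k, Vb k = c * ip (q k - qb) (q k - qb) + ip (D k - Db) (M * (D k - Db)) :=
    fun k => rfl
  have hVbnn : ∀ k, 0 ≤ Vb k := fun k =>
    add_nonneg (mul_nonneg hc.le (ip_self_nonneg _)) (ip_psd hPSD _)
  have hstep2 := hstep xb Db qb hxrel hUDb
  have hVbdec : ∀ k, Vb (k+1) ≤ Vb k := by
    intro k
    have e := hstep2 k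
    have s1 := hSnn xb Db hsubb (k+1)
    have n1 : 0 ≤ c * ip (q (k+1) - q k) (q (k+1) - q k) :=
      mul_nonneg hc.le (ip_self_nonneg _)
    have n2 : 0 ≤ ip (D (k+1) - D k) (M * (D (k+1) - D k)) := ip_psd hPSD _
    rw [hVbk, hVbk]
    linarith
  have hfq : ∀ l j, Tendsto (fun k => (q (m k + 2) - qb) l j) atTop (𝓝 0) := by
    intro l j
    have t := (hqbm l j).sub (tendsto_const_nhds (x := qb l j))
    simpa [Matrix.sub_apply] using t
  have hfD : ∀ l j, Tendsto (fun k => (D (m k + 2) - Db) l j) atTop (𝓝 0) := by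
    intro l j
    have t := (hDbm l j).sub (tendsto_const_nhds (x := Db l j))
    simpa [Matrix.sub_apply] using t
  have hVbsub : Tendsto (fun k => Vb (m k + 2)) atTop (𝓝 0) := by
    have t1 : Tendsto (fun k => ip (q (m k + 2) - qb) (q (m k + 2) - qb)) atTop (𝓝 0) :=
      tendsto_ip_zero _ _ 0 hfq (fun l j => by simpa using hfq l j)
    have t2 : Tendsto (fun k => ip (D (m k + 2) - Db) (M * (D (m k + 2) - Db)))
        atTop (𝓝 0) := by
      refine tendsto_ip_zero _ _ 0 hfD (fun i j => ?_)
      have t3 : Tendsto (fun k => ∑ l, M i l * (D (m k + 2) - Db) l j) atTop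
          (𝓝 (∑ _l : Fin n, (0:ℝ))) :=
        tendsto_finset_sum _ fun l _ => by simpa using tendsto_const_nhds.mul (hfD l j)
      simpa [Matrix.mul_apply] using t3
    have t4 := (t1.const_mul c).add t2
    simpa using t4
  have hVb0 : Tendsto Vb atTop (𝓝 0) :=
    tendsto_zero_of_antitone_subseq Vb hVbnn hVbdec (fun k => m k + 2) hVbsub
  have hqall : ∀ l j, Tendsto (fun k => q k l j) atTop (𝓝 (qb l j)) := by
    intro l j
    have h0 : Tendsto (fun k => q k l j - qb l j) atTop (𝓝 0) := by
      refine tendsto_zero_of_sq _ ?_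
      refine squeeze_zero (fun k => sq_nonneg _) (g := fun k => Vb k / c) (fun k => ?_) ?_
      · rw [le_div_iff₀ hc]
        have h2 : (q k l j - qb l j)^2 ≤ ip (q k - qb) (q k - qb) := by
          simpa [Matrix.sub_apply] using sq_le_ip_self (q k - qb) l j
        have h3 := ip_psd hPSD (D k - Db)
        have h4 := mul_le_mul_of_nonneg_right h2 hc.le
        have h5 := hVbk k
        linarith
      · simpa using hVb0.div_const c
    have t := h0.add (tendsto_const_nhds (x := qb l j))
    simpa using t
  have hq2 : ∀ l j, Tendsto (fun k => q (k + 2) l j) atTop (𝓝 (qb l j)) :=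
    fun l j => (tendsto_add_atTop_iff_nat 2).mpr (hqall l j)
  have hdD2 : ∀ l j, Tendsto (fun k => D (k + 2) l j - D (k + 1) l j) atTop (𝓝 0) :=
    fun l j => (tendsto_add_atTop_iff_nat 1).mpr (hdD l j)
  have hxall : ∀ i j, Tendsto (fun k => x (k + 2) i j) atTop (𝓝 (xb i j)) := by
    have hx2 := hxgen xb qb hxrel (fun k => k) qb hq2 hdD2
    intro i j
    have e : (xb - c • (Uᵀ * (qb - qb))) i j = xb i j := by
      simp
    have t := hx2 i j
    rw [e] at t
    exact t
  have hxtend : Tendsto x atTop (𝓝 xb) := by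
    refine (tendsto_add_atTop_iff_nat 2).mp ?_
    exact tendsto_matrix_of_entries (fun k => x (k+2)) xb hxall
  -- feasibility
  have hfeas : ∀ (z : Matrix (Fin n) (Fin p) ℝ) (qz : Matrix (Fin (n-1)) (Fin p) ℝ),
      z - r + c • (Uᵀ * qz) = 0 → (∑ i, (z i - r i)) = 0 := by
    intro z qz hz
    have hcol : ∀ l, ∑ i, U l i = 0 := by
      have h1 : U.mulVec (fun _ => (1:ℝ)) = 0 := (hU _).mpr ⟨1, rfl⟩
      intro l
      have h2 := congrFun h1 l
      simpa [Matrix.mulVec, dotProduct] using h2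
    funext j
    have e : ∀ i, z i j - r i j = -(c * (Uᵀ * qz) i j) := by
      intro i
      have e' := congrFun (congrFun hz i) j
      simp only [Matrix.add_apply, Matrix.sub_apply, Matrix.smul_apply,
        Matrix.zero_apply, smul_eq_mul] at e'
      linarith
    have hsum : ∑ i, (z i j - r i j) = -(c * ∑ i, (Uᵀ * qz) i j) := by
      calc ∑ i, (z i j - r i j) = ∑ i, -(c * (Uᵀ * qz) i j) :=
            Finset.sum_congr rfl fun i _ => e i
        _ = -∑ i, c * (Uᵀ * qz) i j := by rw [Finset.sum_neg_distrib]
        _ = -(c * ∑ i, (Uᵀ * qz) i j) := by rw [← Finset.mul_sum]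
    have hzero : ∑ i, (Uᵀ * qz) i j = 0 := by
      have e2 : ∑ i, (Uᵀ * qz) i j = ∑ l, (∑ i, U l i) * qz l j := by
        simp only [Matrix.mul_apply, Matrix.transpose_apply]
        rw [Finset.sum_comm]
        simp [Finset.sum_mul]
      rw [e2]
      simp [hcol]
    have e3 : (∑ i, (z i - r i)) j = ∑ i, (z i j - r i j) := by
      simp [Finset.sum_apply, Pi.sub_apply]
    rw [e3, hsum, hzero]
    simp
  -- constant rows of the limit subgradient matrix
  have hcols : ∀ j, ∃ a : ℝ, (fun i => Db i j) = fun _ => a := by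
    intro j
    refine (hU _).mp ?_
    funext l
    have e : (U * Db) l j = 0 := by rw [hUDb]; rfl
    simpa [Matrix.mulVec, dotProduct, Matrix.mul_apply] using e
  choose g hg using hcols
  have hDbij : ∀ i j, Db i j = g j := fun i j => congrFun (hg j) i
  -- conclusion
  refine ⟨xb, hxtend, hfeas xb qb hxrel, ?_⟩
  intro x' hx'
  have hineq : ∀ i, h i (xb i) + Db i ⬝ᵥ (x' i - xb i) ≤ h i (x' i) :=
    fun i => hsubb i (x' i)
  have hsumle : ∑ i, (h i (xb i) + Db i ⬝ᵥ (x' i - xb i)) ≤ ∑ i, h i (x' i) :=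
    Finset.sum_le_sum fun i _ => hineq i
  have hsplit : ∑ i, (h i (xb i) + Db i ⬝ᵥ (x' i - xb i))
      = ∑ i, h i (xb i) + ∑ i, Db i ⬝ᵥ (x' i - xb i) := Finset.sum_add_distrib
  have hzero : ∑ i, Db i ⬝ᵥ (x' i - xb i) = 0 := by
    have hfeasb := hfeas xb qb hxrel
    have hcolsum : ∀ j, ∑ i, (x' i j - xb i j) = 0 := by
      intro j
      have h1 := congrFun hx' j
      have h2 := congrFun hfeasb j
      simp only [Finset.sum_apply, Pi.sub_apply, Pi.zero_apply] at h1 h2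
      have e : ∑ i, (x' i j - xb i j) = ∑ i, (x' i j - r i j) - ∑ i, (xb i j - r i j) := by
        rw [← Finset.sum_sub_distrib]
        exact Finset.sum_congr rfl fun i _ => by ring
      rw [e, h1, h2, sub_zero]
    calc ∑ i, Db i ⬝ᵥ (x' i - xb i) = ∑ i, ∑ j, g j * (x' i j - xb i j) := by
          refine Finset.sum_congr rfl fun i _ => ?_
          simp only [dotProduct, Pi.sub_apply]
          exact Finset.sum_congr rfl fun j _ => by rw [hDbij i j]
      _ = ∑ j, ∑ i, g j * (x' i j - xb i j) := Finset.sum_comm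
      _ = ∑ j, g j * ∑ i, (x' i j - xb i j) := by
          exact Finset.sum_congr rfl fun j _ => (Finset.mul_sum _ _ _).symm
      _ = 0 := by simp [hcolsum]
  rw [hsplit, hzero] at hsumle
  linarith
end
end

section
/- Suppose each f_i is μ_i-strongly convex with L_i-Lipschitz gradient, and let μ = min_i μ_i, L = max_i L_i. Let (x*, q*) satisfy x* − r + c Uᵀ q* = 0 and U ∇f(x*) = 0. Then there exists δ > 0 such that every smooth Mirror-P-EXTRA trajectory (x^k, q^k) satisfies, for all k ≥ 0, ‖z^{k+1} − z*‖_M² ≤ (1/(1+δ)) ‖z^k − z*‖_M², where z^k = (q^k, ∇f(x^k)) and z* = (q*, ∇f(x*)); consequently there exists a constant C ≥ 0 such that ‖x^{k+1} − x*‖_F² ≤ C·(1/(1+δ))^k for all k ≥ 0. -/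
open Matrix

noncomputable section

/-- Squared Frobenius norm. -/
def frobSq {m p : ℕ} (A : Matrix (Fin m) (Fin p) ℝ) : ℝ := ∑ i, ∑ j, (A i j) ^ 2

/-- Squared `P`-weighted seminorm `⟨A, P A⟩ = tr(Aᵀ P A)`. -/
def wSq {m p : ℕ} (P : Matrix (Fin m) (Fin m) ℝ) (A : Matrix (Fin m) (Fin p) ℝ) : ℝ :=
  Matrix.trace (Aᵀ * P * A)

/-- The squared `M`-seminorm of a pair `z = (q, D)`. -/
def Msq {n p : ℕ} (c : ℝ) (P : Matrix (Fin n) (Fin n) ℝ)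
    (q : Matrix (Fin (n - 1)) (Fin p) ℝ) (D : Matrix (Fin n) (Fin p) ℝ) : ℝ :=
  c * frobSq q + wSq P D

/-- Squared Euclidean norm of a vector. -/
def enormSq {p : ℕ} (u : Fin p → ℝ) : ℝ := ∑ j, (u j) ^ 2

/-- The matrix whose `i`-th row is `∇fᵢ(xᵢ)`, given the gradient maps `g i`. -/
def gradMat {n p : ℕ} (g : Fin n → (Fin p → ℝ) → (Fin p → ℝ))
    (x : Matrix (Fin n) (Fin p) ℝ) : Matrix (Fin n) (Fin p) ℝ :=
  Matrix.of fun i => g i (x i)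

namespace MPE

def mInner {m p : ℕ} (A B : Matrix (Fin m) (Fin p) ℝ) : ℝ := ∑ i, ∑ j, A i j * B i j

lemma frobSq_eq {m p : ℕ} (A : Matrix (Fin m) (Fin p) ℝ) : frobSq A = mInner A A := by
  simp [frobSq, mInner, sq]

lemma mInner_comm {m p : ℕ} (A B : Matrix (Fin m) (Fin p) ℝ) : mInner A B = mInner B A := by
  simp [mInner, mul_comm]

lemma mInner_add_left {m p : ℕ} (A B C : Matrix (Fin m) (Fin p) ℝ) :
    mInner (A + B) C = mInner A C + mInner B C := by
  simp [mInner, add_mul, Finset.sum_add_distrib]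

lemma mInner_sub_left {m p : ℕ} (A B C : Matrix (Fin m) (Fin p) ℝ) :
    mInner (A - B) C = mInner A C - mInner B C := by
  simp [mInner, sub_mul, Finset.sum_sub_distrib]

lemma mInner_smul_left {m p : ℕ} (t : ℝ) (A B : Matrix (Fin m) (Fin p) ℝ) :
    mInner (t • A) B = t * mInner A B := by
  simp [mInner, Finset.mul_sum, mul_assoc]

lemma mInner_neg_left {m p : ℕ} (A B : Matrix (Fin m) (Fin p) ℝ) :
    mInner (-A) B = - mInner A B := by
  simp [mInner, Finset.sum_neg_distrib]

lemma frobSq_nonneg {m p : ℕ} (A : Matrix (Fin m) (Fin p) ℝ) : 0 ≤ frobSq A := by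
  apply Finset.sum_nonneg; intro i _; apply Finset.sum_nonneg; intro j _; positivity

lemma mInner_eq_trace {m p : ℕ} (A B : Matrix (Fin m) (Fin p) ℝ) :
    mInner A B = Matrix.trace (Aᵀ * B) := by
  simp only [mInner, Matrix.trace, Matrix.diag, Matrix.mul_apply, Matrix.transpose_apply]
  exact Finset.sum_comm

lemma mInner_mul_left {m m' p : ℕ} (M : Matrix (Fin m') (Fin m) ℝ)
    (A : Matrix (Fin m) (Fin p) ℝ) (B : Matrix (Fin m') (Fin p) ℝ) :
    mInner (M * A) B = mInner A (Mᵀ * B) := by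
  rw [mInner_eq_trace, mInner_eq_trace, Matrix.transpose_mul, Matrix.mul_assoc]

lemma wSq_eq {m p : ℕ} (P : Matrix (Fin m) (Fin m) ℝ) (A : Matrix (Fin m) (Fin p) ℝ) :
    wSq P A = mInner A (P * A) := by
  rw [mInner_eq_trace, wSq, Matrix.mul_assoc]

lemma wSq_nonneg {m p : ℕ} {P : Matrix (Fin m) (Fin m) ℝ} (hP : P.PosSemidef)
    (A : Matrix (Fin m) (Fin p) ℝ) : 0 ≤ wSq P A := by
  rw [wSq_eq, mInner, Finset.sum_comm]
  apply Finset.sum_nonneg; intro j _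
  have h := hP.dotProduct_mulVec_nonneg (fun i => A i j)
  simpa [dotProduct, Matrix.mulVec, Matrix.mul_apply] using h

lemma mInner_P_symm {m p : ℕ} {P : Matrix (Fin m) (Fin m) ℝ} (hP : Pᵀ = P)
    (A B : Matrix (Fin m) (Fin p) ℝ) : mInner A (P * B) = mInner B (P * A) := by
  rw [← hP, ← mInner_mul_left, mInner_comm, hP]

lemma wSq_add {m p : ℕ} {P : Matrix (Fin m) (Fin m) ℝ} (hP : Pᵀ = P)
    (A B : Matrix (Fin m) (Fin p) ℝ) :
    wSq P (A + B) = wSq P A + 2 * mInner A (P * B) + wSq P B := by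
  rw [wSq_eq, wSq_eq, wSq_eq, Matrix.mul_add, mInner_comm, mInner_add_left,
    mInner_comm (P * A), mInner_add_left, mInner_comm (P * B), mInner_add_left]
  have h := mInner_P_symm hP A B
  rw [mInner_comm A (P * B), mInner_comm B (P * A)] at h ⊢
  ring_nf
  rw [h]; ring

lemma wSq_smul {m p : ℕ} (P : Matrix (Fin m) (Fin m) ℝ) (t : ℝ)
    (A : Matrix (Fin m) (Fin p) ℝ) : wSq P (t • A) = t ^ 2 * wSq P A := by
  rw [wSq_eq, wSq_eq, Matrix.mul_smul, mInner_smul_left, mInner_comm, mInner_smul_left,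
    mInner_comm]
  ring

lemma wSq_sub {m p : ℕ} {P : Matrix (Fin m) (Fin m) ℝ} (hP : Pᵀ = P)
    (A B : Matrix (Fin m) (Fin p) ℝ) :
    wSq P (A - B) = wSq P A - 2 * mInner A (P * B) + wSq P B := by
  have h := wSq_add hP A (-B)
  have h2 : A + -B = A - B := (sub_eq_add_neg A B).symm
  rw [h2] at h
  rw [h, (neg_one_smul ℝ B).symm, Matrix.mul_smul, wSq_smul]
  rw [mInner_comm A _, mInner_smul_left, mInner_comm]
  ring

lemma mInner_smul_right {m p : ℕ} (t : ℝ) (A B : Matrix (Fin m) (Fin p) ℝ) :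
    mInner A (t • B) = t * mInner A B := by
  rw [mInner_comm, mInner_smul_left, mInner_comm]

lemma row_sq_le_frobSq {m p : ℕ} (D : Matrix (Fin m) (Fin p) ℝ) (i : Fin m) :
    ∑ j, (D i j) ^ 2 ≤ frobSq D := by
  unfold frobSq
  exact Finset.single_le_sum (f := fun i => ∑ j, (D i j) ^ 2)
    (fun i _ => Finset.sum_nonneg fun j _ => sq_nonneg _) (Finset.mem_univ i)

lemma wSq_le_absSum {m p : ℕ} (P : Matrix (Fin m) (Fin m) ℝ) (D : Matrix (Fin m) (Fin p) ℝ) :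
    wSq P D ≤ (∑ i, ∑ k, |P i k|) * frobSq D := by
  rw [wSq_eq, mInner]
  have key : ∀ i, ∑ j, D i j * (P * D) i j = ∑ k, P i k * ∑ j, D i j * D k j := by
    intro i
    simp only [Matrix.mul_apply, Finset.mul_sum]
    rw [Finset.sum_comm]
    refine Finset.sum_congr rfl fun k _ => ?_
    exact Finset.sum_congr rfl fun j _ => by ring
  calc ∑ i, ∑ j, D i j * (P * D) i j = ∑ i, ∑ k, P i k * ∑ j, D i j * D k j :=
        Finset.sum_congr rfl fun i _ => key i
    _ ≤ ∑ i, ∑ k, |P i k| * frobSq D := by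
        refine Finset.sum_le_sum fun i _ => Finset.sum_le_sum fun k _ => ?_
        have habs : |∑ j, D i j * D k j| ≤ frobSq D := by
          have h1 : |∑ j, D i j * D k j| ≤ ∑ j, |D i j * D k j| :=
            Finset.abs_sum_le_sum_abs _ _
          have h2 : ∑ j, |D i j * D k j| ≤ ∑ j, ((D i j) ^ 2 + (D k j) ^ 2) / 2 := by
            refine Finset.sum_le_sum fun j _ => ?_
            rw [abs_mul]
            nlinarith [sq_nonneg (|D i j| - |D k j|), sq_abs (D i j), sq_abs (D k j),
              abs_nonneg (D i j), abs_nonneg (D k j)]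
          have h3 : ∑ j, ((D i j) ^ 2 + (D k j) ^ 2) / 2 ≤ frobSq D := by
            have := row_sq_le_frobSq D i
            have := row_sq_le_frobSq D k
            have : ∑ j, ((D i j) ^ 2 + (D k j) ^ 2) / 2
                = ((∑ j, (D i j) ^ 2) + (∑ j, (D k j) ^ 2)) / 2 := by
              rw [← Finset.sum_add_distrib, ← Finset.sum_div]
            rw [this]
            have hi := row_sq_le_frobSq D i
            have hk := row_sq_le_frobSq D k
            linarith
          linarith
        calc P i k * ∑ j, D i j * D k j ≤ |P i k * ∑ j, D i j * D k j| := le_abs_self _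
          _ = |P i k| * |∑ j, D i j * D k j| := abs_mul _ _
          _ ≤ |P i k| * frobSq D := by
              exact mul_le_mul_of_nonneg_left habs (abs_nonneg _)
    _ = (∑ i, ∑ k, |P i k|) * frobSq D := by
        rw [Finset.sum_mul]
        exact Finset.sum_congr rfl fun i _ => (Finset.sum_mul _ _ _).symm

lemma wSq_CS {m p : ℕ} {P : Matrix (Fin m) (Fin m) ℝ} (hP : P.PosSemidef)
    (A B : Matrix (Fin m) (Fin p) ℝ) :
    (mInner A (P * B)) ^ 2 ≤ wSq P A * wSq P B := by
  have hsym : Pᵀ = P := hP.1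
  have h : ∀ t : ℝ, 0 ≤ wSq P B * t ^ 2 + (2 * mInner A (P * B)) * t + wSq P A := by
    intro t
    have h0 := wSq_nonneg hP (A + t • B)
    rw [wSq_add hsym, Matrix.mul_smul, mInner_smul_right, wSq_smul] at h0
    linarith [h0]
  have h' : ∀ t : ℝ, 0 ≤ wSq P B * (t * t) + (2 * mInner A (P * B)) * t + wSq P A := by
    intro t
    have := h t
    nlinarith [this]
  have hd := discrim_le_zero h'
  unfold discrim at hd
  nlinarith [hd]

lemma frobSq_P_mul_le {m p : ℕ} {P : Matrix (Fin m) (Fin m) ℝ} (hP : P.PosSemidef)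
    (D : Matrix (Fin m) (Fin p) ℝ) :
    frobSq (P * D) ≤ (∑ i, ∑ k, |P i k|) * wSq P D := by
  have hsym : Pᵀ = P := hP.1
  set Mb := ∑ i, ∑ k, |P i k| with hMb
  have hMb0 : 0 ≤ Mb := Finset.sum_nonneg fun i _ => Finset.sum_nonneg fun k _ => abs_nonneg _
  set F := frobSq (P * D) with hF
  set W := wSq P D with hW
  have hF0 : 0 ≤ F := frobSq_nonneg _
  have hW0 : 0 ≤ W := wSq_nonneg hP _
  have hFi : F = mInner D (P * (P * D)) := by
    rw [hF, frobSq_eq, mInner_mul_left, hsym]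
  have hCS : F ^ 2 ≤ W * wSq P (P * D) := by rw [hFi]; exact wSq_CS hP D (P * D)
  have h2 : wSq P (P * D) ≤ Mb * F := wSq_le_absSum P (P * D)
  have h3 : F ^ 2 ≤ W * (Mb * F) :=
    le_trans hCS (mul_le_mul_of_nonneg_left h2 hW0)
  rcases eq_or_lt_of_le hF0 with h | h
  · rw [← h]; positivity
  · nlinarith [h3, h]

lemma enormSq_nonneg {p : ℕ} (u : Fin p → ℝ) : 0 ≤ enormSq u :=
  Finset.sum_nonneg fun j _ => sq_nonneg _

lemma frobSq_cols {m p : ℕ} (A : Matrix (Fin m) (Fin p) ℝ) :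
    frobSq A = ∑ j, enormSq (fun i => A i j) := by
  unfold frobSq enormSq
  exact Finset.sum_comm

lemma enormSq_le_norm {k : ℕ} (v : Fin k → ℝ) : enormSq v ≤ (k : ℝ) * ‖v‖ ^ 2 := by
  calc enormSq v = ∑ j, (v j) ^ 2 := rfl
    _ ≤ ∑ _j : Fin k, ‖v‖ ^ 2 := by
        refine Finset.sum_le_sum fun j _ => ?_
        have h1 : ‖v j‖ ≤ ‖v‖ := norm_le_pi_norm v j
        have h2 : (v j) ^ 2 = ‖v j‖ ^ 2 := by rw [Real.norm_eq_abs, sq_abs]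
        rw [h2]
        exact pow_le_pow_left₀ (norm_nonneg _) h1 2
    _ = (k : ℝ) * ‖v‖ ^ 2 := by simp [Finset.sum_const, Finset.card_univ]

lemma norm_sq_le_enormSq {k : ℕ} (v : Fin k → ℝ) : ‖v‖ ^ 2 ≤ enormSq v := by
  have h0 : 0 ≤ enormSq v := enormSq_nonneg v
  have h : ‖v‖ ≤ Real.sqrt (enormSq v) := by
    refine pi_norm_le_iff_of_nonneg (Real.sqrt_nonneg _) |>.2 fun j => ?_
    rw [Real.norm_eq_abs, ← Real.sqrt_sq_eq_abs]
    refine Real.sqrt_le_sqrt ?_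
    exact Finset.single_le_sum (f := fun j => (v j) ^ 2)
      (fun j _ => sq_nonneg _) (Finset.mem_univ j)
  calc ‖v‖ ^ 2 ≤ Real.sqrt (enormSq v) ^ 2 :=
        pow_le_pow_left₀ (norm_nonneg _) h 2
    _ = enormSq v := Real.sq_sqrt h0

set_option maxHeartbeats 1000000 in
lemma sigma_exists (n : ℕ) (hn : 2 ≤ n) (U : Matrix (Fin (n - 1)) (Fin n) ℝ)
    (hU : ∀ v : Fin n → ℝ, U.mulVec v = 0 ↔ ∃ a : ℝ, v = fun _ => a) :
    ∃ σ2 : ℝ, 0 < σ2 ∧ ∀ w : Fin (n - 1) → ℝ,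
      σ2 * enormSq w ≤ enormSq (Uᵀ.mulVec w) := by
  -- U is surjective
  have h1 : (fun _ => (1 : ℝ)) ≠ (0 : Fin n → ℝ) := by
    intro h
    have := congrFun h ⟨0, by omega⟩
    norm_num at this
  have hker : LinearMap.ker U.mulVecLin = Submodule.span ℝ {(fun _ => (1 : ℝ) : Fin n → ℝ)} := by
    ext v
    rw [LinearMap.mem_ker, Matrix.mulVecLin_apply, hU v, Submodule.mem_span_singleton]
    constructor
    · rintro ⟨a, rfl⟩
      exact ⟨a, by funext i; simp⟩
    · rintro ⟨a, rfl⟩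
      exact ⟨a, by funext i; simp⟩
  have hkd : Module.finrank ℝ (LinearMap.ker U.mulVecLin) = 1 := by
    rw [hker]; exact finrank_span_singleton h1
  have hrn := LinearMap.finrank_range_add_finrank_ker U.mulVecLin
  have hdom : Module.finrank ℝ (Fin n → ℝ) = n := by simp
  have hcod : Module.finrank ℝ (Fin (n - 1) → ℝ) = n - 1 := by simp
  have hrange : LinearMap.range U.mulVecLin = ⊤ := by
    apply Submodule.eq_top_of_finrank_eq
    rw [hcod]
    omega
  have hsurj : Function.Surjective U.mulVecLin := LinearMap.range_eq_top.mp hrange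
  -- Uᵀ is injective
  set T := Uᵀ.mulVecLin with hT
  have hinj : Function.Injective T := by
    rw [← LinearMap.ker_eq_bot]
    rw [Submodule.eq_bot_iff]
    intro w hw
    rw [LinearMap.mem_ker, Matrix.mulVecLin_apply] at hw
    obtain ⟨v, hv⟩ := hsurj w
    rw [Matrix.mulVecLin_apply] at hv
    have hdp : w ⬝ᵥ w = 0 := by
      calc w ⬝ᵥ w = w ⬝ᵥ (U.mulVec v) := by rw [hv]
        _ = (Uᵀ.mulVec w) ⬝ᵥ v := by
            rw [Matrix.dotProduct_mulVec, ← Matrix.mulVec_transpose]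
        _ = 0 := by rw [hw, zero_dotProduct]
    funext i
    have h0 : ∀ j, 0 ≤ w j * w j := fun j => mul_self_nonneg _
    have := (Finset.sum_eq_zero_iff_of_nonneg (fun j _ => h0 j)).mp hdp i (Finset.mem_univ i)
    have : w i = 0 := by nlinarith [this]
    exact this
  -- norm bound via continuous linear equivalence
  have hKex : ∃ K : ℝ, 0 < K ∧ ∀ w : Fin (n - 1) → ℝ, ‖w‖ ≤ K * ‖Uᵀ.mulVec w‖ := by
    let e : (Fin (n - 1) → ℝ) ≃ₗ[ℝ] LinearMap.range T := LinearEquiv.ofInjective T hinj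
    let ec := e.toContinuousLinearEquiv
    let N : ℝ := ‖(ec.symm : LinearMap.range T →L[ℝ] (Fin (n - 1) → ℝ))‖
    refine ⟨N + 1, by positivity, fun w => ?_⟩
    have h1 : ‖(ec.symm : LinearMap.range T →L[ℝ] (Fin (n - 1) → ℝ)) (ec w)‖
        ≤ N * ‖ec w‖ := ContinuousLinearMap.le_opNorm _ _
    have h2 : (ec.symm : LinearMap.range T →L[ℝ] (Fin (n - 1) → ℝ)) (ec w) = w := by
      simp [ec]
    have h3 : ‖ec w‖ = ‖Uᵀ.mulVec w‖ := by
      have hcoe : ((ec w : LinearMap.range T) : Fin n → ℝ) = Uᵀ.mulVec w := by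
        simp [ec, e, hT, Matrix.mulVec_transpose]
      rw [← hcoe]
      rfl
    rw [h2, h3] at h1
    have hn0 : 0 ≤ ‖Uᵀ.mulVec w‖ := norm_nonneg _
    have hN0 : 0 ≤ N := norm_nonneg ((ec.symm : LinearMap.range T →L[ℝ] (Fin (n - 1) → ℝ)))
    nlinarith [h1, hn0]
  obtain ⟨K, hK1, hKb⟩ := hKex
  refine ⟨1 / ((n : ℝ) * K ^ 2 * n + 1), by positivity, fun w => ?_⟩
  have hb1 : enormSq w ≤ ((n - 1 : ℕ) : ℝ) * ‖w‖ ^ 2 := enormSq_le_norm w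
  have hb2 : ‖Uᵀ.mulVec w‖ ^ 2 ≤ enormSq (Uᵀ.mulVec w) := norm_sq_le_enormSq _
  have hb3 : ‖w‖ ^ 2 ≤ K ^ 2 * ‖Uᵀ.mulVec w‖ ^ 2 := by
    have := hKb w
    nlinarith [norm_nonneg w, norm_nonneg (Uᵀ.mulVec w), hK1]
  have hcard : ((n - 1 : ℕ) : ℝ) ≤ (n : ℝ) := by exact_mod_cast Nat.sub_le n 1
  have hen : 0 ≤ enormSq (Uᵀ.mulVec w) := enormSq_nonneg _
  have hchain : enormSq w ≤ (n : ℝ) * K ^ 2 * enormSq (Uᵀ.mulVec w) := by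
    have hnn : (0 : ℝ) ≤ ((n - 1 : ℕ) : ℝ) := by positivity
    have hKsq : (0 : ℝ) ≤ K ^ 2 := sq_nonneg _
    have t1 : ((n - 1 : ℕ) : ℝ) * ‖w‖ ^ 2 ≤ ((n - 1 : ℕ) : ℝ) * (K ^ 2 * ‖Uᵀ.mulVec w‖ ^ 2) :=
      mul_le_mul_of_nonneg_left hb3 hnn
    have t2 : ((n - 1 : ℕ) : ℝ) * (K ^ 2 * ‖Uᵀ.mulVec w‖ ^ 2)
        ≤ (n : ℝ) * (K ^ 2 * ‖Uᵀ.mulVec w‖ ^ 2) :=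
      mul_le_mul_of_nonneg_right hcard (by positivity)
    have t3 : (n : ℝ) * (K ^ 2 * ‖Uᵀ.mulVec w‖ ^ 2) ≤ (n : ℝ) * (K ^ 2 * enormSq (Uᵀ.mulVec w)) :=
      mul_le_mul_of_nonneg_left (mul_le_mul_of_nonneg_left hb2 hKsq) (by positivity)
    have := le_trans hb1 (le_trans t1 (le_trans t2 t3))
    linarith [this]
  rw [div_mul_eq_mul_div, div_le_iff₀ (by positivity)]
  have hw0 : 0 ≤ enormSq w := enormSq_nonneg w
  have h2n : (2 : ℝ) ≤ (n : ℝ) := by exact_mod_cast hn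
  nlinarith [hchain, hen, sq_nonneg K]

lemma frobSq_sub {m p : ℕ} (A B : Matrix (Fin m) (Fin p) ℝ) :
    frobSq (A - B) = frobSq A - 2 * mInner A B + frobSq B := by
  rw [frobSq_eq, frobSq_eq, frobSq_eq, mInner_sub_left, mInner_comm A (A - B),
    mInner_sub_left, mInner_comm B (A - B), mInner_sub_left, mInner_comm B A]
  ring

lemma frobSq_add {m p : ℕ} (A B : Matrix (Fin m) (Fin p) ℝ) :
    frobSq (A + B) = frobSq A + 2 * mInner A B + frobSq B := by
  have h : A + B = A - (-B) := by abel
  rw [h, frobSq_sub, mInner_comm A (-B), mInner_neg_left, mInner_comm B A]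
  have h2 : frobSq (-B) = frobSq B := by
    have : (-B : Matrix (Fin m) (Fin p) ℝ) = (0 : Matrix (Fin m) (Fin p) ℝ) - B := by abel
    rw [this, frobSq_sub]
    simp [frobSq, mInner]
  rw [h2]; ring

lemma frobSq_neg {m p : ℕ} (A : Matrix (Fin m) (Fin p) ℝ) : frobSq (-A) = frobSq A := by
  have : (-A : Matrix (Fin m) (Fin p) ℝ) = (0 : Matrix (Fin m) (Fin p) ℝ) - A := by abel
  rw [this, frobSq_sub]
  simp [frobSq, mInner]

lemma frobSq_add_le {m p : ℕ} (A B : Matrix (Fin m) (Fin p) ℝ) :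
    frobSq (A + B) ≤ 2 * frobSq A + 2 * frobSq B := by
  have h1 := frobSq_nonneg (A - B)
  rw [frobSq_sub] at h1
  rw [frobSq_add]
  linarith

lemma frobSq_smul {m p : ℕ} (t : ℝ) (A : Matrix (Fin m) (Fin p) ℝ) :
    frobSq (t • A) = t ^ 2 * frobSq A := by
  simp [frobSq, Matrix.smul_apply, smul_eq_mul, mul_pow, Finset.mul_sum]

end MPE

set_option maxHeartbeats 2000000 in
/-- Linear (geometric) rate of Mirror-P-EXTRA under strong convexity and
gradient Lipschitz continuity (Theorem 3). -/
theorem stmt_8 (n p : ℕ) (hn : 2 ≤ n) (hp : 1 ≤ p)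
    (U : Matrix (Fin (n - 1)) (Fin n) ℝ)
    (hU : ∀ v : Fin n → ℝ, U.mulVec v = 0 ↔ ∃ a : ℝ, v = fun _ => a)
    (r : Matrix (Fin n) (Fin p) ℝ)
    (f : Fin n → (Fin p → ℝ) → ℝ)
    (g : Fin n → (Fin p → ℝ) → (Fin p → ℝ))
    -- each `fᵢ` is differentiable with gradient `g i`
    (hgrad : ∀ i (u : Fin p → ℝ),
      HasGradientAt (fun v : EuclideanSpace ℝ (Fin p) => f i ((WithLp.equiv 2 (Fin p → ℝ)) v))
        ((WithLp.equiv 2 (Fin p → ℝ)).symm (g i u))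
        ((WithLp.equiv 2 (Fin p → ℝ)).symm u))
    (μ L : Fin n → ℝ) (hμpos : ∀ i, 0 < μ i) (hLpos : ∀ i, 0 < L i)
    -- each `fᵢ` is `μᵢ`-strongly convex
    (hsc : ∀ i (u v : Fin p → ℝ), μ i * enormSq (u - v) ≤ (g i u - g i v) ⬝ᵥ (u - v))
    -- each `∇fᵢ` is `Lᵢ`-Lipschitz
    (hlip : ∀ i (u v : Fin p → ℝ), enormSq (g i u - g i v) ≤ (L i) ^ 2 * enormSq (u - v))
    (c : ℝ) (hc : 0 < c)
    (β : Fin n → ℝ) (hβ : ∀ i, 0 < β i)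
    (hPSD : (Matrix.diagonal β - c • (Uᵀ * U)).PosSemidef)
    -- the optimal pair `(x*, q*)`
    (xs : Matrix (Fin n) (Fin p) ℝ) (qs : Matrix (Fin (n - 1)) (Fin p) ℝ)
    (hopt1 : xs - r + c • (Uᵀ * qs) = 0)
    (hopt2 : U * gradMat g xs = 0) :
    ∃ δ : ℝ, 0 < δ ∧
      ∀ (x : ℕ → Matrix (Fin n) (Fin p) ℝ) (q : ℕ → Matrix (Fin (n - 1)) (Fin p) ℝ),
        (∀ k : ℕ,
          x (k + 1) - r + c • (Uᵀ * q (k + 1))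
            + (Matrix.diagonal β - c • (Uᵀ * U)) * (gradMat g (x (k + 1)) - gradMat g (x k))
              = 0) →
        (∀ k : ℕ, q (k + 1) = q k + U * gradMat g (x (k + 1))) →
        ((∀ k : ℕ,
            Msq c (Matrix.diagonal β - c • (Uᵀ * U)) (q (k + 1) - qs)
                (gradMat g (x (k + 1)) - gradMat g xs) ≤
              (1 / (1 + δ)) *
                Msq c (Matrix.diagonal β - c • (Uᵀ * U)) (q k - qs)
                  (gradMat g (x k) - gradMat g xs)) ∧
          ∃ C : ℝ, 0 ≤ C ∧
            ∀ k : ℕ, frobSq (x (k + 1) - xs) ≤ C * (1 / (1 + δ)) ^ k) := by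
  
  classical
  haveI : Nonempty (Fin n) := ⟨⟨0, by omega⟩⟩
  obtain ⟨σ2, hσ2, hσ⟩ := MPE.sigma_exists n hn U hU
  set P : Matrix (Fin n) (Fin n) ℝ := Matrix.diagonal β - c • (Uᵀ * U) with hPdef
  have hsym : Pᵀ = P := hPSD.1
  have hσM : ∀ Q : Matrix (Fin (n - 1)) (Fin p) ℝ, σ2 * frobSq Q ≤ frobSq (Uᵀ * Q) := by
    intro Q
    rw [MPE.frobSq_cols Q, MPE.frobSq_cols (Uᵀ * Q), Finset.mul_sum]
    refine Finset.sum_le_sum fun j _ => ?_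
    have h := hσ (fun k => Q k j)
    have e : (fun i => (Uᵀ * Q) i j) = Uᵀ.mulVec (fun k => Q k j) := by
      funext i
      simp [Matrix.mul_apply, Matrix.mulVec, dotProduct]
    rw [e]
    exact h
  set μ0 : ℝ := Finset.univ.inf' Finset.univ_nonempty μ with hμ0def
  set Lm : ℝ := Finset.univ.sup' Finset.univ_nonempty L with hLmdef
  have hμ0pos : 0 < μ0 := by
    rw [hμ0def]
    exact (Finset.lt_inf'_iff _).mpr fun i _ => hμpos i
  have hμ0le : ∀ i, μ0 ≤ μ i := fun i => by
    rw [hμ0def]; exact Finset.inf'_le _ (Finset.mem_univ i)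
  have hLmle : ∀ i, L i ≤ Lm := fun i => by
    rw [hLmdef]; exact Finset.le_sup' _ (Finset.mem_univ i)
  have hLm0 : 0 < Lm := lt_of_lt_of_le (hLpos ⟨0, by omega⟩) (hLmle ⟨0, by omega⟩)
  set Mb : ℝ := ∑ i, ∑ k, |P i k| with hMbdef
  have hMb0 : 0 ≤ Mb := by
    rw [hMbdef]
    exact Finset.sum_nonneg fun i _ => Finset.sum_nonneg fun k _ => abs_nonneg _
  set T : ℝ := Mb + 1 with hTdef
  have hT0 : 0 < T := by rw [hTdef]; linarith
  have hMbT : Mb ≤ T := by rw [hTdef]; linarith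
  set γ : ℝ := 1 / (c * σ2) with hγdef
  have hγ0 : 0 < γ := by rw [hγdef]; positivity
  set A1 : ℝ := 2 * γ + T * Lm ^ 2 with hA1def
  set A2 : ℝ := 2 * T * γ with hA2def
  have hA10 : 0 < A1 := by rw [hA1def]; positivity
  have hA20 : 0 < A2 := by rw [hA2def]; positivity
  set δ : ℝ := min (2 * μ0 / A1) (1 / A2) with hδdef
  have hδ0 : 0 < δ := by
    rw [hδdef]
    exact lt_min (div_pos (by linarith) hA10) (div_pos one_pos hA20)
  have hδA1 : δ * A1 ≤ 2 * μ0 := by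
    have h1 : δ ≤ 2 * μ0 / A1 := by rw [hδdef]; exact min_le_left _ _
    have h2 := mul_le_mul_of_nonneg_right h1 (le_of_lt hA10)
    rwa [div_mul_cancel₀ _ (ne_of_gt hA10)] at h2
  have hδA2 : δ * A2 ≤ 1 := by
    have h1 : δ ≤ 1 / A2 := by rw [hδdef]; exact min_le_right _ _
    have h2 := mul_le_mul_of_nonneg_right h1 (le_of_lt hA20)
    rwa [div_mul_cancel₀ _ (ne_of_gt hA20)] at h2
  refine ⟨δ, hδ0, fun x q hrec1 hrec2 => ?_⟩
  have hcore : ∀ k : ℕ,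
      (Msq c P (q (k + 1) - qs) (gradMat g (x (k + 1)) - gradMat g xs) ≤
        (1 / (1 + δ)) * Msq c P (q k - qs) (gradMat g (x k) - gradMat g xs)) ∧
      2 * μ0 * frobSq (x (k + 1) - xs) ≤
        Msq c P (q k - qs) (gradMat g (x k) - gradMat g xs) -
          Msq c P (q (k + 1) - qs) (gradMat g (x (k + 1)) - gradMat g xs) := by
    intro k
    set X := x (k + 1) - xs with hX
    set D1 := gradMat g (x (k + 1)) - gradMat g xs with hD1
    set D0 := gradMat g (x k) - gradMat g xs with hD0
    set Q1 := q (k + 1) - qs with hQ1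
    set Q0 := q k - qs with hQ0
    have hA : X + c • (Uᵀ * Q1) + P * (D1 - D0) = 0 := by
      have h1 := hrec1 k
      have e : X + c • (Uᵀ * Q1) + P * (D1 - D0)
          = (x (k + 1) - r + c • (Uᵀ * q (k + 1))
              + P * (gradMat g (x (k + 1)) - gradMat g (x k)))
            - (xs - r + c • (Uᵀ * qs)) := by
        rw [hX, hQ1, hD1, hD0]
        simp only [Matrix.mul_sub, smul_sub]
        abel
      rw [e, h1, hopt1, sub_zero]
    have hQeq : Q1 - Q0 = U * D1 := by
      rw [hQ1, hQ0, hD1, Matrix.mul_sub, hopt2, sub_zero, hrec2 k]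
      abel
    have hIP : MPE.mInner X D1 + c * MPE.mInner Q1 (Q1 - Q0)
        + MPE.mInner D1 (P * (D1 - D0)) = 0 := by
      have h0 : MPE.mInner (X + c • (Uᵀ * Q1) + P * (D1 - D0)) D1 = 0 := by
        rw [hA]; simp [MPE.mInner]
      rw [MPE.mInner_add_left, MPE.mInner_add_left, MPE.mInner_smul_left,
        MPE.mInner_mul_left, Matrix.transpose_transpose, ← hQeq,
        MPE.mInner_comm (P * (D1 - D0)) D1] at h0
      linarith [h0]
    have hexpQ : frobSq Q0 = frobSq Q1 - 2 * MPE.mInner Q1 (Q1 - Q0) + frobSq (Q1 - Q0) := by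
      have h : Q0 = Q1 - (Q1 - Q0) := by abel
      conv_lhs => rw [h]
      exact MPE.frobSq_sub _ _
    have hexpD : wSq P D0 = wSq P D1 - 2 * MPE.mInner D1 (P * (D1 - D0))
        + wSq P (D1 - D0) := by
      have h : D0 = D1 - (D1 - D0) := by abel
      conv_lhs => rw [h]
      exact MPE.wSq_sub hsym _ _
    have hE : Msq c P Q0 D0 - Msq c P Q1 D1
        = 2 * MPE.mInner X D1 + c * frobSq (Q1 - Q0) + wSq P (D1 - D0) := by
      simp only [Msq]
      linear_combination c * hexpQ + hexpD - 2 * hIP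
    have hSC : μ0 * frobSq X ≤ MPE.mInner X D1 := by
      have hrow : ∀ i, μ0 * (∑ j, (X i j) ^ 2) ≤ ∑ j, X i j * D1 i j := by
        intro i
        have h := hsc i (x (k + 1) i) (xs i)
        have e1 : enormSq (x (k + 1) i - xs i) = ∑ j, (X i j) ^ 2 := by
          rw [hX]
          simp [enormSq, Matrix.sub_apply]
        have e2 : (g i (x (k + 1) i) - g i (xs i)) ⬝ᵥ (x (k + 1) i - xs i)
            = ∑ j, X i j * D1 i j := by
          rw [hX, hD1]
          simp only [dotProduct, Pi.sub_apply, Matrix.sub_apply, gradMat,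
            Matrix.of_apply]
          exact Finset.sum_congr rfl fun j _ => by ring
        rw [e1, e2] at h
        have hen : 0 ≤ ∑ j, (X i j) ^ 2 := Finset.sum_nonneg fun j _ => sq_nonneg _
        have := mul_le_mul_of_nonneg_right (hμ0le i) hen
        linarith
      have hmi : MPE.mInner X D1 = ∑ i, ∑ j, X i j * D1 i j := rfl
      have hfx : frobSq X = ∑ i, ∑ j, (X i j) ^ 2 := rfl
      rw [hmi, hfx, Finset.mul_sum]
      exact Finset.sum_le_sum fun i _ => hrow i
    have hfX0 : 0 ≤ frobSq X := MPE.frobSq_nonneg X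
    have hW0 : 0 ≤ wSq P (D1 - D0) := MPE.wSq_nonneg hPSD _
    have hQd0 : 0 ≤ frobSq (Q1 - Q0) := MPE.frobSq_nonneg _
    have hLip : frobSq D1 ≤ Lm ^ 2 * frobSq X := by
      have hrow : ∀ i, ∑ j, (D1 i j) ^ 2 ≤ Lm ^ 2 * ∑ j, (X i j) ^ 2 := by
        intro i
        have h := hlip i (x (k + 1) i) (xs i)
        have e1 : enormSq (x (k + 1) i - xs i) = ∑ j, (X i j) ^ 2 := by
          rw [hX]; simp [enormSq, Matrix.sub_apply]
        have e2 : enormSq (g i (x (k + 1) i) - g i (xs i)) = ∑ j, (D1 i j) ^ 2 := by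
          rw [hD1]
          simp [enormSq, Matrix.sub_apply, gradMat]
        rw [e1, e2] at h
        have hen : 0 ≤ ∑ j, (X i j) ^ 2 := Finset.sum_nonneg fun j _ => sq_nonneg _
        have hL2 : (L i) ^ 2 ≤ Lm ^ 2 :=
          pow_le_pow_left₀ (le_of_lt (hLpos i)) (hLmle i) 2
        have := mul_le_mul_of_nonneg_right hL2 hen
        linarith
      have h1 : frobSq D1 = ∑ i, ∑ j, (D1 i j) ^ 2 := rfl
      have h2 : frobSq X = ∑ i, ∑ j, (X i j) ^ 2 := rfl
      rw [h1, h2, Finset.mul_sum]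
      exact Finset.sum_le_sum fun i _ => hrow i
    have hbD : wSq P D1 ≤ T * Lm ^ 2 * frobSq X := by
      calc wSq P D1 ≤ Mb * frobSq D1 := by
            have := MPE.wSq_le_absSum P D1
            rw [← hMbdef] at this
            exact this
        _ ≤ T * frobSq D1 := mul_le_mul_of_nonneg_right hMbT (MPE.frobSq_nonneg _)
        _ ≤ T * (Lm ^ 2 * frobSq X) := mul_le_mul_of_nonneg_left hLip (le_of_lt hT0)
        _ = T * Lm ^ 2 * frobSq X := by ring
    have hbQ : c * frobSq Q1 ≤ 2 * γ * frobSq X + 2 * T * γ * wSq P (D1 - D0) := by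
      have hAc : c • (Uᵀ * Q1) = -(X + P * (D1 - D0)) := by
        have h1 : c • (Uᵀ * Q1) + (X + P * (D1 - D0)) = 0 := by
          rw [← hA]; abel
        exact eq_neg_of_add_eq_zero_left h1
      have h2 : frobSq (c • (Uᵀ * Q1)) = frobSq (X + P * (D1 - D0)) := by
        rw [hAc, MPE.frobSq_neg]
      rw [MPE.frobSq_smul] at h2
      have h4 : frobSq (X + P * (D1 - D0)) ≤ 2 * frobSq X + 2 * (T * wSq P (D1 - D0)) := by
        have ha := MPE.frobSq_add_le X (P * (D1 - D0))
        have hb := MPE.frobSq_P_mul_le hPSD (D1 - D0)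
        rw [← hMbdef] at hb
        have hcc : Mb * wSq P (D1 - D0) ≤ T * wSq P (D1 - D0) :=
          mul_le_mul_of_nonneg_right hMbT hW0
        linarith
      have h5 := hσM Q1
      have hgc : γ * (c ^ 2 * σ2 * frobSq Q1) = c * frobSq Q1 := by
        rw [hγdef]
        field_simp
      have h6 : c ^ 2 * σ2 * frobSq Q1 ≤ c ^ 2 * frobSq (Uᵀ * Q1) := by
        have := mul_le_mul_of_nonneg_left h5 (sq_nonneg c)
        nlinarith [this]
      calc c * frobSq Q1 = γ * (c ^ 2 * σ2 * frobSq Q1) := hgc.symm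
        _ ≤ γ * (c ^ 2 * frobSq (Uᵀ * Q1)) :=
            mul_le_mul_of_nonneg_left h6 (le_of_lt hγ0)
        _ = γ * frobSq (X + P * (D1 - D0)) := by rw [h2]
        _ ≤ γ * (2 * frobSq X + 2 * (T * wSq P (D1 - D0))) :=
            mul_le_mul_of_nonneg_left h4 (le_of_lt hγ0)
        _ = 2 * γ * frobSq X + 2 * T * γ * wSq P (D1 - D0) := by ring
    have hS1b : Msq c P Q1 D1 ≤ A1 * frobSq X + A2 * wSq P (D1 - D0) := by
      simp only [Msq]
      rw [hA1def, hA2def]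
      linarith [hbQ, hbD]
    have hδS1 : δ * Msq c P Q1 D1 ≤ 2 * μ0 * frobSq X + wSq P (D1 - D0) := by
      have t0 := mul_le_mul_of_nonneg_left hS1b (le_of_lt hδ0)
      have t1 : δ * A1 * frobSq X ≤ 2 * μ0 * frobSq X :=
        mul_le_mul_of_nonneg_right hδA1 hfX0
      have t2 : δ * A2 * wSq P (D1 - D0) ≤ 1 * wSq P (D1 - D0) :=
        mul_le_mul_of_nonneg_right hδA2 hW0
      linarith [t0, t1, t2]
    have hdiff : 2 * μ0 * frobSq X + wSq P (D1 - D0)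
        ≤ Msq c P Q0 D0 - Msq c P Q1 D1 := by
      have hcq : 0 ≤ c * frobSq (Q1 - Q0) := mul_nonneg (le_of_lt hc) hQd0
      rw [hE]
      linarith [hSC]
    constructor
    · have h1δ : (0 : ℝ) < 1 + δ := by linarith
      have he : (1 / (1 + δ)) * Msq c P Q0 D0 = Msq c P Q0 D0 / (1 + δ) := by ring
      rw [he, le_div_iff₀ h1δ]
      linarith [hδS1, hdiff]
    · linarith [hdiff, hW0]
  refine ⟨fun k => (hcore k).1, ?_⟩
  have hMnn : ∀ k : ℕ, 0 ≤ Msq c P (q k - qs) (gradMat g (x k) - gradMat g xs) := by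
    intro k
    exact add_nonneg (mul_nonneg (le_of_lt hc) (MPE.frobSq_nonneg _)) (MPE.wSq_nonneg hPSD _)
  have hr0 : (0 : ℝ) ≤ 1 / (1 + δ) := by positivity
  have hgeo : ∀ k : ℕ, Msq c P (q k - qs) (gradMat g (x k) - gradMat g xs)
      ≤ (1 / (1 + δ)) ^ k * Msq c P (q 0 - qs) (gradMat g (x 0) - gradMat g xs) := by
    intro k
    induction k with
    | zero => simp
    | succ k ih =>
      calc Msq c P (q (k + 1) - qs) (gradMat g (x (k + 1)) - gradMat g xs)
          ≤ (1 / (1 + δ)) * Msq c P (q k - qs) (gradMat g (x k) - gradMat g xs) :=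
            (hcore k).1
        _ ≤ (1 / (1 + δ)) * ((1 / (1 + δ)) ^ k
              * Msq c P (q 0 - qs) (gradMat g (x 0) - gradMat g xs)) :=
            mul_le_mul_of_nonneg_left ih hr0
        _ = (1 / (1 + δ)) ^ (k + 1)
              * Msq c P (q 0 - qs) (gradMat g (x 0) - gradMat g xs) := by ring
  refine ⟨Msq c P (q 0 - qs) (gradMat g (x 0) - gradMat g xs) / (2 * μ0),
    div_nonneg (hMnn 0) (by linarith), fun k => ?_⟩
  have h1 := (hcore k).2
  have h2 := hgeo k
  have h3 := hMnn (k + 1)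
  have hμ2 : (0 : ℝ) < 2 * μ0 := by linarith
  have he : Msq c P (q 0 - qs) (gradMat g (x 0) - gradMat g xs) / (2 * μ0) * (1 / (1 + δ)) ^ k
      = ((1 / (1 + δ)) ^ k * Msq c P (q 0 - qs) (gradMat g (x 0) - gradMat g xs)) / (2 * μ0) := by
    ring
  rw [he, le_div_iff₀ hμ2]
  linarith [h1, h2, h3]
end
end
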